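/- arXiv:2103.14694 — 4 statements merged into one kernel-verified Lean document; each statement's English description precedes it below -/
import Mathlib

section
/- Let D be a drawing on [0,a]×[0,b] all of whose nodes are of one of the eleven continuous node types, let W(D) be its Kirchhoff subspace and d = dim W(D). A parametrization of D is an injective map τ from {1,…,d} to the segments of D such that the linear map π_τ : W(D) → ℝ^d, w ↦ (w(τ(1)),…,w(τ(d))), is a linear isomorphism. Then for any two parametrizations τ and τ′ of D, the linear automorphism π_τ ∘ π_{τ′}^{-1} of ℝ^d satisfies |det(π_τ ∘ π_{τ′}^{-1})| = 1. -/
open scoped Classical BigOperators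
open MeasureTheory

noncomputable section

/-- A weighted (vertical or horizontal) segment in the plane.  If `vert` is `true`
the segment is the vertical segment `{fixed} × [lo, hi]` with intensity `s`;
otherwise it is the horizontal segment `[lo, hi] × {fixed}` with intensity `s`. -/
structure Seg where
  vert : Bool
  fixed : ℝ
  lo : ℝ
  hi : ℝ
  s : ℝ

namespace Seg

/-- lower / left endpoint -/
def pLo (σ : Seg) : ℝ × ℝ := if σ.vert then (σ.fixed, σ.lo) else (σ.lo, σ.fixed)

/-- upper / right endpoint -/
def pHi (σ : Seg) : ℝ × ℝ := if σ.vert then (σ.fixed, σ.hi) else (σ.hi, σ.fixed)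

def length (σ : Seg) : ℝ := σ.hi - σ.lo

/-- relative interior of the segment -/
def relint (σ : Seg) : Set (ℝ × ℝ) :=
  if σ.vert then {p | p.1 = σ.fixed ∧ σ.lo < p.2 ∧ p.2 < σ.hi}
  else {p | p.2 = σ.fixed ∧ σ.lo < p.1 ∧ p.1 < σ.hi}

/-- the closed segment, as a set of points -/
def closedSeg (σ : Seg) : Set (ℝ × ℝ) :=
  if σ.vert then {p | p.1 = σ.fixed ∧ σ.lo ≤ p.2 ∧ p.2 ≤ σ.hi}
  else {p | p.2 = σ.fixed ∧ σ.lo ≤ p.1 ∧ p.1 ≤ σ.hi}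

/-- the segment is a genuine weighted segment of the box `[0,a] × [0,b]` -/
def InBox (a b : ℝ) (σ : Seg) : Prop :=
  σ.lo < σ.hi ∧
  (if σ.vert then 0 ≤ σ.fixed ∧ σ.fixed ≤ a ∧ 0 ≤ σ.lo ∧ σ.hi ≤ b
   else 0 ≤ σ.fixed ∧ σ.fixed ≤ b ∧ 0 ≤ σ.lo ∧ σ.hi ≤ a)

end Seg

/-- segments of `D` arriving at `p` from the south -/
def fromS (D : Finset Seg) (p : ℝ × ℝ) : Finset Seg :=
  D.filter fun σ => σ.vert ∧ σ.pHi = p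

/-- segments of `D` leaving `p` to the north -/
def toN (D : Finset Seg) (p : ℝ × ℝ) : Finset Seg :=
  D.filter fun σ => σ.vert ∧ σ.pLo = p

/-- segments of `D` arriving at `p` from the west -/
def fromW (D : Finset Seg) (p : ℝ × ℝ) : Finset Seg :=
  D.filter fun σ => ¬σ.vert ∧ σ.pHi = p

/-- segments of `D` leaving `p` to the east -/
def toE (D : Finset Seg) (p : ℝ × ℝ) : Finset Seg :=
  D.filter fun σ => ¬σ.vert ∧ σ.pLo = p

/-- `p` lies in the open rectangle `(0,a) × (0,b)` -/
def InteriorPt (a b : ℝ) (p : ℝ × ℝ) : Prop :=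
  0 < p.1 ∧ p.1 < a ∧ 0 < p.2 ∧ p.2 < b

/-- Kirchhoff's node law at `p` -/
def Kirchhoff (D : Finset Seg) (p : ℝ × ℝ) : Prop :=
  (∑ σ ∈ fromS D p, σ.s) + (∑ σ ∈ fromW D p, σ.s)
    = (∑ σ ∈ toN D p, σ.s) + (∑ σ ∈ toE D p, σ.s)

/-- `p` is a node of `D` (an endpoint of some segment of `D`) -/
def IsNode (D : Finset Seg) (p : ℝ × ℝ) : Prop :=
  ∃ σ ∈ D, σ.pLo = p ∨ σ.pHi = p

/-- `D` is a drawing on the box `[0,a] × [0,b]` -/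
def IsDrawing (a b : ℝ) (D : Finset Seg) : Prop :=
  (∀ σ ∈ D, σ.InBox a b) ∧
  (∀ σ ∈ D, ∀ τ ∈ D, σ ≠ τ → Disjoint σ.relint τ.relint) ∧
  (∀ σ ∈ D, ∀ τ ∈ D, σ.pLo ∉ τ.relint ∧ σ.pHi ∉ τ.relint) ∧
  (∀ p, InteriorPt a b p → Kirchhoff D p)

/-- the four degrees (from south, from west, to north, to east) of a point -/
def Deg (D : Finset Seg) (p : ℝ × ℝ) : ℕ × ℕ × ℕ × ℕ :=
  ((fromS D p).card, (fromW D p).card, (toN D p).card, (toE D p).card)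

def IsVertEntry (D : Finset Seg) (p : ℝ × ℝ) : Prop := p.2 = 0 ∧ (toN D p).Nonempty
def IsVertExit (b : ℝ) (D : Finset Seg) (p : ℝ × ℝ) : Prop := p.2 = b ∧ (fromS D p).Nonempty
def IsHorEntry (D : Finset Seg) (p : ℝ × ℝ) : Prop := p.1 = 0 ∧ (toE D p).Nonempty
def IsHorExit (a : ℝ) (D : Finset Seg) (p : ℝ × ℝ) : Prop := p.1 = a ∧ (fromW D p).Nonempty
def IsVertSplit (a b : ℝ) (D : Finset Seg) (p : ℝ × ℝ) : Prop :=
  InteriorPt a b p ∧ Deg D p = (1, 0, 1, 1)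
def IsVertTurn (a b : ℝ) (D : Finset Seg) (p : ℝ × ℝ) : Prop :=
  InteriorPt a b p ∧ Deg D p = (1, 0, 0, 1)
def IsVertCoal (a b : ℝ) (D : Finset Seg) (p : ℝ × ℝ) : Prop :=
  InteriorPt a b p ∧ Deg D p = (1, 1, 1, 0)
def IsHorSplit (a b : ℝ) (D : Finset Seg) (p : ℝ × ℝ) : Prop :=
  InteriorPt a b p ∧ Deg D p = (0, 1, 1, 1)
def IsHorTurn (a b : ℝ) (D : Finset Seg) (p : ℝ × ℝ) : Prop :=
  InteriorPt a b p ∧ Deg D p = (0, 1, 1, 0)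
def IsHorCoal (a b : ℝ) (D : Finset Seg) (p : ℝ × ℝ) : Prop :=
  InteriorPt a b p ∧ Deg D p = (1, 1, 0, 1)
def IsCrossing (a b : ℝ) (D : Finset Seg) (p : ℝ × ℝ) : Prop :=
  InteriorPt a b p ∧ Deg D p = (1, 1, 1, 1)
def IsSpontSplit (a b : ℝ) (D : Finset Seg) (p : ℝ × ℝ) : Prop :=
  InteriorPt a b p ∧ Deg D p = (0, 0, 1, 1)
def IsDoubleCoal (a b : ℝ) (D : Finset Seg) (p : ℝ × ℝ) : Prop :=
  InteriorPt a b p ∧ Deg D p = (1, 1, 0, 0)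

/-- `p` is a node of one of the eleven continuous node types -/
def ContinuousNode (a b : ℝ) (D : Finset Seg) (p : ℝ × ℝ) : Prop :=
  IsVertEntry D p ∨ IsVertExit b D p ∨ IsHorEntry D p ∨ IsHorExit a D p ∨
  IsVertSplit a b D p ∨ IsVertTurn a b D p ∨ IsVertCoal a b D p ∨
  IsHorSplit a b D p ∨ IsHorTurn a b D p ∨ IsHorCoal a b D p ∨ IsCrossing a b D p

/-- `p` is a node of one of the thirteen node types -/
def Node13 (a b : ℝ) (D : Finset Seg) (p : ℝ × ℝ) : Prop :=
  ContinuousNode a b D p ∨ IsSpontSplit a b D p ∨ IsDoubleCoal a b D p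

def nVE (D : Finset Seg) : ℕ := {p | IsVertEntry D p}.ncard
def nVX (b : ℝ) (D : Finset Seg) : ℕ := {p | IsVertExit b D p}.ncard
def nHE (D : Finset Seg) : ℕ := {p | IsHorEntry D p}.ncard
def nHX (a : ℝ) (D : Finset Seg) : ℕ := {p | IsHorExit a D p}.ncard
def nVSp (a b : ℝ) (D : Finset Seg) : ℕ := {p | IsVertSplit a b D p}.ncard
def nVT (a b : ℝ) (D : Finset Seg) : ℕ := {p | IsVertTurn a b D p}.ncard
def nVC (a b : ℝ) (D : Finset Seg) : ℕ := {p | IsVertCoal a b D p}.ncard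
def nHSp (a b : ℝ) (D : Finset Seg) : ℕ := {p | IsHorSplit a b D p}.ncard
def nHT (a b : ℝ) (D : Finset Seg) : ℕ := {p | IsHorTurn a b D p}.ncard
def nHC (a b : ℝ) (D : Finset Seg) : ℕ := {p | IsHorCoal a b D p}.ncard
def nCr (a b : ℝ) (D : Finset Seg) : ℕ := {p | IsCrossing a b D p}.ncard
def nSS (a b : ℝ) (D : Finset Seg) : ℕ := {p | IsSpontSplit a b D p}.ncard
def nDC (a b : ℝ) (D : Finset Seg) : ℕ := {p | IsDoubleCoal a b D p}.ncard


/-- The Kirchhoff subspace of a drawing `D`: all reassignments of real intensities to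
the segments of `D` satisfying Kirchhoff's node law at every interior node. -/
def kirchSub (a b : ℝ) (D : Finset Seg) : Submodule ℝ ({σ // σ ∈ D} → ℝ) where
  carrier := {w | ∀ p : ℝ × ℝ, InteriorPt a b p →
    (∑ σ ∈ Finset.univ.filter (fun σ : {σ // σ ∈ D} => σ.1.vert ∧ σ.1.pHi = p), w σ) +
    (∑ σ ∈ Finset.univ.filter (fun σ : {σ // σ ∈ D} => ¬σ.1.vert ∧ σ.1.pHi = p), w σ) =
    (∑ σ ∈ Finset.univ.filter (fun σ : {σ // σ ∈ D} => σ.1.vert ∧ σ.1.pLo = p), w σ) +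
    (∑ σ ∈ Finset.univ.filter (fun σ : {σ // σ ∈ D} => ¬σ.1.vert ∧ σ.1.pLo = p), w σ)}
  add_mem' := by
    intro u v hu hv p hp
    have h1 := hu p hp
    have h2 := hv p hp
    simp only [Set.mem_setOf_eq, Pi.add_apply, Finset.sum_add_distrib] at *
    linarith
  zero_mem' := by
    intro p hp
    simp
  smul_mem' := by
    intro c u hu p hp
    have h := hu p hp
    simp only [Set.mem_setOf_eq, Pi.smul_apply, smul_eq_mul, ← Finset.mul_sum] at *
    rw [← mul_add, ← mul_add, h]


/-- evaluation of an intensity assignment in the Kirchhoff subspace on a chosen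
family of segments -/
def evalMap (a b : ℝ) (D : Finset Seg) (d : ℕ) (τ : Fin d → {σ // σ ∈ D}) :
    kirchSub a b D →ₗ[ℝ] (Fin d → ℝ) :=
  (LinearMap.pi fun i => LinearMap.proj (τ i)).comp (kirchSub a b D).subtype

/-- a parametrization of a drawing: an injective choice of `d = dim W(D)` segments on
which the evaluation map of the Kirchhoff subspace is a linear isomorphism -/
def IsParam (a b : ℝ) (D : Finset Seg) (d : ℕ) (τ : Fin d → {σ // σ ∈ D}) : Prop :=
  Function.Injective τ ∧ Function.Bijective (evalMap a b D d τ)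

namespace KirchAux

/-- values in `{0, 1, -1}` -/
def TUval (x : ℝ) : Prop := x = 0 ∨ x = 1 ∨ x = -1

lemma TUval.mul {x y : ℝ} (hx : TUval x) (hy : TUval y) : TUval (x*y) := by
  rcases hx with h|h|h <;> rcases hy with h'|h'|h' <;> simp [TUval, h, h']

lemma TUval.negOnePow (n : ℕ) : TUval ((-1 : ℝ) ^ n) := by
  rcases Nat.even_or_odd n with h | h
  · right; left; exact h.neg_one_pow
  · right; right; exact h.neg_one_pow

/-- determinant of a matrix each of whose rows has entries in {0,1,-1} with
at most one `1` and at most one `-1` is `0`, `1` or `-1`. -/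
lemma tu_det : ∀ (k : ℕ) (M : Matrix (Fin k) (Fin k) ℝ),
    (∀ i j, TUval (M i j)) →
    (∀ i j j', M i j = 1 → M i j' = 1 → j = j') →
    (∀ i j j', M i j = -1 → M i j' = -1 → j = j') →
    TUval M.det := by
  intro k
  induction k with
  | zero => intro M _ _ _; right; left; simp [Matrix.det_fin_zero]
  | succ k ih =>
    intro M h0 h1 h2
    by_cases hrow : ∃ i : Fin (k+1), ∀ j j', M i j ≠ 0 → M i j' ≠ 0 → j = j'
    · obtain ⟨i, hi⟩ := hrow
      by_cases hz : ∀ j, M i j = 0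
      · left
        exact Matrix.det_eq_zero_of_row_eq_zero i hz
      · push_neg at hz
        obtain ⟨j, hj⟩ := hz
        have hdet := Matrix.det_succ_row M i
        have hsum : ∑ j' : Fin (k+1), (-1 : ℝ) ^ (i + j' : ℕ) * M i j' *
            (M.submatrix i.succAbove j'.succAbove).det
            = (-1 : ℝ) ^ (i + j : ℕ) * M i j * (M.submatrix i.succAbove j.succAbove).det := by
          apply Finset.sum_eq_single_of_mem j (Finset.mem_univ j)
          intro j' _ hj'
          have : M i j' = 0 := by
            by_contra h
            exact hj' (hi j' j h hj)
          simp [this]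
        rw [hsum] at hdet
        have hminor : TUval (M.submatrix i.succAbove j.succAbove).det := by
          apply ih
          · intro i' j'; exact h0 _ _
          · intro i' a b ha hb
            exact Fin.succAbove_right_injective (h1 (i.succAbove i') _ _ ha hb)
          · intro i' a b ha hb
            exact Fin.succAbove_right_injective (h2 (i.succAbove i') _ _ ha hb)
        rw [hdet]
        exact ((TUval.negOnePow _).mul (h0 i j)).mul hminor
    · push_neg at hrow
      left
      rw [← Matrix.exists_mulVec_eq_zero_iff]
      refine ⟨fun _ => (1:ℝ), ?_, ?_⟩
      · intro h
        have := congrFun h ⟨0, Nat.succ_pos k⟩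
        simp at this
      · funext i
        obtain ⟨j, j', hj, hj', hjj⟩ := hrow i
        have hone : ∃ a, M i a = 1 := by
          rcases h0 i j with h|h|h
          · exact absurd h hj
          · exact ⟨j, h⟩
          · rcases h0 i j' with h'|h'|h'
            · exact absurd h' hj'
            · exact ⟨j', h'⟩
            · exact absurd (h2 i j j' h h') hjj
        have hmone : ∃ a, M i a = -1 := by
          rcases h0 i j with h|h|h
          · exact absurd h hj
          · rcases h0 i j' with h'|h'|h'
            · exact absurd h' hj'
            · exact absurd (h1 i j j' h h') hjj
            · exact ⟨j', h'⟩
          · exact ⟨j, h⟩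
        obtain ⟨a, ha⟩ := hone
        obtain ⟨a', ha'⟩ := hmone
        have haa : a ≠ a' := by intro h; rw [h, ha'] at ha; norm_num at ha
        have hrest : ∀ c, c ≠ a → c ≠ a' → M i c = 0 := by
          intro c hca hca'
          rcases h0 i c with h|h|h
          · exact h
          · exact absurd (h1 i c a h ha) hca
          · exact absurd (h2 i c a' h ha') hca'
        have hmv : M.mulVec (fun _ => (1:ℝ)) i = ∑ c, M i c := by
          simp [Matrix.mulVec, dotProduct]
        rw [Pi.zero_apply, hmv]
        have := Finset.sum_eq_add_of_mem a a' (Finset.mem_univ a) (Finset.mem_univ a') haa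
          (fun c _ hc => hrest c (by tauto) (by tauto))
        rw [this, ha, ha']
        ring

/-- `tu_det` for an arbitrary finite index type -/
lemma tu_det' {ι : Type} [Fintype ι] [DecidableEq ι] (M : Matrix ι ι ℝ)
    (h0 : ∀ i j, TUval (M i j))
    (h1 : ∀ i j j', M i j = 1 → M i j' = 1 → j = j')
    (h2 : ∀ i j j', M i j = -1 → M i j' = -1 → j = j') :
    TUval M.det := by
  let e := Fintype.equivFin ι
  have : M.det = (M.submatrix e.symm e.symm).det := (Matrix.det_submatrix_equiv_self e.symm M).symm
  rw [this]
  apply tu_det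
  · intro i j; exact h0 _ _
  · intro i a b ha hb
    have := h1 (e.symm i) (e.symm a) (e.symm b) ha hb
    exact e.symm.injective this
  · intro i a b ha hb
    have := h2 (e.symm i) (e.symm a) (e.symm b) ha hb
    exact e.symm.injective this

/-- the subring of real numbers that are integers -/
def ZZ : Subring ℝ := (Int.castRingHom ℝ).range

lemma TUval.mem_ZZ {x : ℝ} (h : TUval x) : x ∈ ZZ := by
  rcases h with h|h|h
  · exact ⟨0, by simp [h]⟩
  · exact ⟨1, by simp [h]⟩
  · exact ⟨-1, by simp [h]⟩

lemma det_mem_ZZ {ι : Type} [Fintype ι] [DecidableEq ι] (M : Matrix ι ι ℝ)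
    (h : ∀ i j, M i j ∈ ZZ) : M.det ∈ ZZ := by
  rw [Matrix.det_apply]
  apply Subring.sum_mem
  intro σ _
  rw [Units.smul_def]
  apply zsmul_mem
  exact Subring.prod_mem _ (fun i _ => h _ _)

/-- the coefficient of the Kirchhoff constraint at `p` on the segment `σ` -/
def phi (p : ℝ × ℝ) (σ : Seg) : ℝ :=
  (if σ.pHi = p then 1 else 0) - (if σ.pLo = p then 1 else 0)

lemma phi_tuval (p : ℝ × ℝ) (σ : Seg) : TUval (phi p σ) := by
  unfold phi TUval
  split_ifs <;> norm_num

lemma pLo_ne_pHi {a b : ℝ} {σ : Seg} (h : σ.InBox a b) : σ.pLo ≠ σ.pHi := by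
  have hlt := h.1
  unfold Seg.pLo Seg.pHi
  intro hcontr
  by_cases hv : σ.vert
  · simp [hv, Prod.ext_iff] at hcontr
    exact absurd hcontr (ne_of_lt hlt)
  · simp [hv, Prod.ext_iff] at hcontr
    exact absurd hcontr (ne_of_lt hlt)

lemma phi_eq_one_iff {a b : ℝ} {σ : Seg} (h : σ.InBox a b) (p : ℝ × ℝ) :
    phi p σ = 1 ↔ σ.pHi = p := by
  unfold phi
  constructor
  · intro heq
    split_ifs at heq with h1 h2 h2 <;> first | exact h1 | norm_num at heq
  · intro heq
    rw [if_pos heq, if_neg (by rw [← heq]; exact pLo_ne_pHi h)]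
    norm_num

lemma phi_eq_negone_iff {a b : ℝ} {σ : Seg} (h : σ.InBox a b) (p : ℝ × ℝ) :
    phi p σ = -1 ↔ σ.pLo = p := by
  unfold phi
  constructor
  · intro heq
    split_ifs at heq with h1 h2 h2 <;> first | exact h2 | norm_num at heq
  · intro heq
    rw [if_pos heq, if_neg (by rw [← heq]; intro hc; exact pLo_ne_pHi h hc.symm)]
    norm_num

lemma phi_eq_zero {σ : Seg} {p : ℝ × ℝ} (hHi : σ.pHi ≠ p) (hLo : σ.pLo ≠ p) :
    phi p σ = 0 := by
  unfold phi
  rw [if_neg hHi, if_neg hLo]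
  norm_num

/-- reformulation of membership in the Kirchhoff subspace -/
lemma mem_kirchSub_iff (a b : ℝ) (D : Finset Seg) (w : {σ // σ ∈ D} → ℝ) :
    w ∈ kirchSub a b D ↔ ∀ p : ℝ × ℝ, InteriorPt a b p →
      ∑ σ : {σ // σ ∈ D}, phi p σ.1 * w σ = 0 := by
  have hmem : w ∈ kirchSub a b D ↔ ∀ p : ℝ × ℝ, InteriorPt a b p →
    (∑ σ ∈ Finset.univ.filter (fun σ : {σ // σ ∈ D} => σ.1.vert ∧ σ.1.pHi = p), w σ) +
    (∑ σ ∈ Finset.univ.filter (fun σ : {σ // σ ∈ D} => ¬σ.1.vert ∧ σ.1.pHi = p), w σ) =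
    (∑ σ ∈ Finset.univ.filter (fun σ : {σ // σ ∈ D} => σ.1.vert ∧ σ.1.pLo = p), w σ) +
    (∑ σ ∈ Finset.univ.filter (fun σ : {σ // σ ∈ D} => ¬σ.1.vert ∧ σ.1.pLo = p), w σ) :=
    Iff.rfl
  rw [hmem]
  apply forall_congr'
  intro p
  apply imp_congr_right
  intro _
  have hsplit1 :
      (∑ σ ∈ Finset.univ.filter (fun σ : {σ // σ ∈ D} => σ.1.vert ∧ σ.1.pHi = p), w σ) +
      (∑ σ ∈ Finset.univ.filter (fun σ : {σ // σ ∈ D} => ¬σ.1.vert ∧ σ.1.pHi = p), w σ)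
      = ∑ σ ∈ Finset.univ.filter (fun σ : {σ // σ ∈ D} => σ.1.pHi = p), w σ := by
    rw [← Finset.sum_filter_add_sum_filter_not
      (Finset.univ.filter (fun σ : {σ // σ ∈ D} => σ.1.pHi = p)) (fun σ => σ.1.vert) w]
    rw [Finset.filter_filter, Finset.filter_filter]
    congr 1
    · apply Finset.sum_congr _ (fun _ _ => rfl)
      apply Finset.filter_congr
      intro x _; tauto
    · apply Finset.sum_congr _ (fun _ _ => rfl)
      apply Finset.filter_congr
      intro x _; tauto
  have hsplit2 :
      (∑ σ ∈ Finset.univ.filter (fun σ : {σ // σ ∈ D} => σ.1.vert ∧ σ.1.pLo = p), w σ) +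
      (∑ σ ∈ Finset.univ.filter (fun σ : {σ // σ ∈ D} => ¬σ.1.vert ∧ σ.1.pLo = p), w σ)
      = ∑ σ ∈ Finset.univ.filter (fun σ : {σ // σ ∈ D} => σ.1.pLo = p), w σ := by
    rw [← Finset.sum_filter_add_sum_filter_not
      (Finset.univ.filter (fun σ : {σ // σ ∈ D} => σ.1.pLo = p)) (fun σ => σ.1.vert) w]
    rw [Finset.filter_filter, Finset.filter_filter]
    congr 1
    · apply Finset.sum_congr _ (fun _ _ => rfl)
      apply Finset.filter_congr
      intro x _; tauto
    · apply Finset.sum_congr _ (fun _ _ => rfl)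
      apply Finset.filter_congr
      intro x _; tauto
  rw [hsplit1, hsplit2]
  have hphi : ∑ σ : {σ // σ ∈ D}, phi p σ.1 * w σ =
      (∑ σ ∈ Finset.univ.filter (fun σ : {σ // σ ∈ D} => σ.1.pHi = p), w σ)
      - (∑ σ ∈ Finset.univ.filter (fun σ : {σ // σ ∈ D} => σ.1.pLo = p), w σ) := by
    rw [Finset.sum_filter, Finset.sum_filter, ← Finset.sum_sub_distrib]
    apply Finset.sum_congr rfl
    intro σ _
    unfold phi
    split_ifs <;> ring
  rw [hphi, sub_eq_zero, eq_comm]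

/-- the finite set of relevant (interior) constraint points -/
def Pset (a b : ℝ) (D : Finset Seg) : Finset (ℝ × ℝ) :=
  (D.image Seg.pLo ∪ D.image Seg.pHi).filter (fun p => InteriorPt a b p)

lemma phi_zero_of_not_memPset {a b : ℝ} {D : Finset Seg} {p : ℝ × ℝ}
    (hp : InteriorPt a b p) (hp' : p ∉ Pset a b D) {σ : Seg} (hσ : σ ∈ D) :
    phi p σ = 0 := by
  apply phi_eq_zero
  · intro h
    exact hp' (Finset.mem_filter.mpr ⟨Finset.mem_union_right _
      (Finset.mem_image.mpr ⟨σ, hσ, h⟩), hp⟩)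
  · intro h
    exact hp' (Finset.mem_filter.mpr ⟨Finset.mem_union_left _
      (Finset.mem_image.mpr ⟨σ, hσ, h⟩), hp⟩)

end KirchAux
namespace KirchAux
open Matrix

lemma param_integral (a b : ℝ) (D : Finset Seg) (hD : ∀ σ ∈ D, σ.InBox a b)
    (d : ℕ) (τ : Fin d → {σ // σ ∈ D}) (hτ : IsParam a b D d τ)
    (w : {σ // σ ∈ D} → ℝ) (hw : w ∈ kirchSub a b D)
    (hB : ∀ i, w (τ i) ∈ ZZ) : ∀ σ, w σ ∈ ZZ := by
  let S := {σ // σ ∈ D}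
  let κ := {σ : S // σ ∉ Set.range τ}
  let P' := {p // p ∈ Pset a b D}
  haveI : Fintype κ := inferInstanceAs (Fintype {σ : S // σ ∉ Set.range τ})
  haveI : DecidableEq κ := Classical.decEq _
  haveI : Fintype P' := inferInstanceAs (Fintype {p // p ∈ Pset a b D})
  haveI : Finite P' := inferInstanceAs (Finite {p // p ∈ Pset a b D})
  -- the constraint matrix restricted to the non-parametrizing segments
  let A : Matrix P' κ ℝ := Matrix.of fun p σ => phi p.1 σ.1.1
  have hInt : ∀ p : P', InteriorPt a b p.1 := fun p => (Finset.mem_filter.mp p.2).2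
  -- the kernel of `A` is trivial
  have hker : ∀ y : κ → ℝ, A.mulVec y = 0 → y = 0 := by
    intro y hy
    let w0 : S → ℝ := fun σ => if h : σ ∈ Set.range τ then 0 else y ⟨σ, h⟩
    have hw0pos : ∀ (σ : S) (_ : σ ∈ Set.range τ), w0 σ = 0 := fun σ h => dif_pos h
    have hw0neg : ∀ (σ : S) (h : σ ∉ Set.range τ), w0 σ = y ⟨σ, h⟩ := fun σ h => dif_neg h
    have hsum : ∀ p : ℝ × ℝ, ∑ σ : S, phi p σ.1 * w0 σ = ∑ σ : κ, phi p σ.1.1 * y σ := by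
      intro p
      have hvanish : ∀ σ ∈ Finset.univ, phi p σ.1 * w0 σ ≠ 0 → (σ ∉ Set.range τ) := by
        intro σ _ hne hmem
        apply hne
        rw [hw0pos σ hmem, mul_zero]
      calc ∑ σ : S, phi p σ.1 * w0 σ
          = ∑ σ ∈ Finset.univ.filter (fun σ : S => σ ∉ Set.range τ), phi p σ.1 * w0 σ :=
            (Finset.sum_filter_of_ne hvanish).symm
        _ = ∑ σ : κ, phi p σ.1.1 * w0 σ.1 :=
            Finset.sum_subtype _ (by intro x; simp) _
        _ = ∑ σ : κ, phi p σ.1.1 * y σ := by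
            apply Finset.sum_congr rfl
            intro σ _
            rw [hw0neg σ.1 σ.2]
    have hw0 : w0 ∈ kirchSub a b D := by
      rw [mem_kirchSub_iff]
      intro p hp
      rw [hsum p]
      by_cases hmem : p ∈ Pset a b D
      · have := congrFun hy ⟨p, hmem⟩
        simpa [Matrix.mulVec, dotProduct, A] using this
      · apply Finset.sum_eq_zero
        intro σ _
        rw [phi_zero_of_not_memPset hp hmem σ.1.2, zero_mul]
    have hev : evalMap a b D d τ ⟨w0, hw0⟩ = 0 := by
      funext i
      show w0 (τ i) = 0
      exact hw0pos _ (Set.mem_range_self i)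
    have h0 : (⟨w0, hw0⟩ : kirchSub a b D) = 0 := by
      apply hτ.2.injective
      rw [hev, map_zero]
    funext σ
    have hz : w0 σ.1 = 0 := by
      have := congrArg Subtype.val h0
      exact congrFun this σ.1
    rw [Pi.zero_apply, ← hz]
    exact (hw0neg σ.1 σ.2).symm
  have hinj : Function.Injective A.mulVecLin := by
    rw [← LinearMap.ker_eq_bot]
    apply LinearMap.ker_eq_bot'.mpr
    intro y hy
    exact hker y hy
  -- the rows of `A` span everything
  have hspan : Submodule.span ℝ (Set.range A) = ⊤ := by
    apply Submodule.eq_top_of_finrank_eq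
    have h1 : Aᵀ.rank = Module.finrank ℝ (Submodule.span ℝ (Set.range A)) := by
      rw [Matrix.rank_eq_finrank_span_cols]; rfl
    have h2 : A.rank = Fintype.card κ := by
      rw [Matrix.rank, LinearMap.finrank_range_of_inj hinj,
        Module.finrank_fintype_fun_eq_card]
    rw [← h1, Matrix.rank_transpose, h2, Module.finrank_fintype_fun_eq_card]
  obtain ⟨t, hts, hsp, hli⟩ := exists_linearIndependent ℝ (Set.range A)
  haveI : Fintype t := ((Set.finite_range A).subset hts).fintype
  let bas : Module.Basis t ℝ (κ → ℝ) := Module.Basis.mk hli (by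
    rw [Subtype.range_coe, hsp, hspan])
  have hcard : Fintype.card t = Fintype.card κ := by
    have := Module.finrank_eq_card_basis bas
    rw [Module.finrank_fintype_fun_eq_card] at this
    exact this.symm
  let e : t ≃ κ := Fintype.equivOfCardEq hcard
  have hchoose : ∀ v : t, ∃ p : P', A p = (v : κ → ℝ) := fun v => hts v.2
  choose pfun hpfun using hchoose
  have hpfun_inj : Function.Injective pfun := by
    intro v v' h
    apply Subtype.ext
    rw [← hpfun v, ← hpfun v', h]
  -- the selected square submatrix
  let N : Matrix κ κ ℝ := Matrix.of fun i j => (e.symm i : κ → ℝ) j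
  have hNA : ∀ i j, N i j = phi (pfun (e.symm i)).1 j.1.1 := by
    intro i j
    show ((e.symm i : κ → ℝ)) j = _
    rw [← hpfun (e.symm i)]
    rfl
  have hN0 : ∀ i j, TUval (N i j) := by
    intro i j; rw [hNA]; exact phi_tuval _ _
  have hN1 : ∀ j i i', N i j = 1 → N i' j = 1 → i = i' := by
    intro j i i' h h'
    rw [hNA] at h h'
    have e1 := (phi_eq_one_iff (hD _ j.1.2) _).mp h
    have e2 := (phi_eq_one_iff (hD _ j.1.2) _).mp h'
    have : pfun (e.symm i) = pfun (e.symm i') := Subtype.ext (by rw [← e1, ← e2])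
    exact e.symm.injective (hpfun_inj this)
  have hN2 : ∀ j i i', N i j = -1 → N i' j = -1 → i = i' := by
    intro j i i' h h'
    rw [hNA] at h h'
    have e1 := (phi_eq_negone_iff (hD _ j.1.2) _).mp h
    have e2 := (phi_eq_negone_iff (hD _ j.1.2) _).mp h'
    have : pfun (e.symm i) = pfun (e.symm i') := Subtype.ext (by rw [← e1, ← e2])
    exact e.symm.injective (hpfun_inj this)
  -- determinant of `N` is `±1`
  have hNdetTU : TUval N.det := by
    rw [← Matrix.det_transpose]
    apply tu_det' Nᵀ
    · intro i j; exact hN0 j i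
    · intro i j j' h h'; exact hN1 i j j' h h'
    · intro i j j' h h'; exact hN2 i j j' h h'
  have hNdet_ne : N.det ≠ 0 := by
    intro hdet
    obtain ⟨v, hv0, hv⟩ := (Matrix.exists_vecMul_eq_zero_iff).mpr hdet
    have hliK : LinearIndependent ℝ (fun i : κ => (e.symm i : κ → ℝ)) :=
      hli.comp e.symm e.symm.injective
    have := Fintype.linearIndependent_iff.mp hliK v (by
      funext j
      have := congrFun hv j
      simpa [Matrix.vecMul, dotProduct, N] using this)
    exact hv0 (funext this)
  -- inverse of `N` has integer entries
  have hNinv : ∀ i j, N⁻¹ i j ∈ ZZ := by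
    intro i j
    rw [Matrix.inv_def, Matrix.smul_apply, Ring.inverse_eq_inv]
    have hadj : TUval (N.adjugate i j) := by
      have : N.adjugate i j = (Nᵀ.updateRow i (Pi.single j 1)).det := by
        rw [← Matrix.adjugate_apply, ← Matrix.adjugate_transpose, Matrix.transpose_apply]
      rw [this]
      apply tu_det'
      · intro i' j'
        rw [Matrix.updateRow_apply]
        split_ifs with h
        · rcases eq_or_ne j' j with h'|h'
          · right; left; rw [h', Pi.single_eq_same]
          · left; rw [Pi.single_eq_of_ne h']
        · exact hN0 j' i'
      · intro i' x x' hx hx'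
        rw [Matrix.updateRow_apply] at hx hx'
        split_ifs at hx hx' with h
        · have h1 : x = j := by
            by_contra hne
            rw [Pi.single_eq_of_ne hne] at hx
            norm_num at hx
          have h2 : x' = j := by
            by_contra hne
            rw [Pi.single_eq_of_ne hne] at hx'
            norm_num at hx'
          rw [h1, h2]
        · rw [Matrix.transpose_apply] at hx hx'
          exact hN1 i' x x' hx hx'
      · intro i' x x' hx hx'
        rw [Matrix.updateRow_apply] at hx hx'
        split_ifs at hx hx' with h
        · exfalso
          rcases eq_or_ne x j with h1|h1
          · rw [h1, Pi.single_eq_same] at hx; norm_num at hx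
          · rw [Pi.single_eq_of_ne h1] at hx; norm_num at hx
        · rw [Matrix.transpose_apply] at hx hx'
          exact hN2 i' x x' hx hx'
    rcases hNdetTU with h|h|h
    · exact absurd h hNdet_ne
    · rw [h]
      simpa using hadj.mem_ZZ
    · rw [h]
      have : ((-1:ℝ))⁻¹ = -1 := by norm_num
      rw [this]
      exact mul_mem (neg_mem (Subring.one_mem ZZ)) hadj.mem_ZZ
  -- solve for the remaining coordinates
  let y : κ → ℝ := fun σ => w σ.1
  have hEq : ∀ i : κ, (N.mulVec y) i =
      -(∑ σ ∈ Finset.univ.filter (fun σ : S => σ ∈ Set.range τ),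
        phi (pfun (e.symm i)).1 σ.1 * w σ) := by
    intro i
    have hk := (mem_kirchSub_iff a b D w).mp hw (pfun (e.symm i)).1 (hInt _)
    rw [← Finset.sum_filter_add_sum_filter_not Finset.univ
      (fun σ : S => σ ∈ Set.range τ) (fun σ => phi (pfun (e.symm i)).1 σ.1 * w σ)] at hk
    have hrest : ∑ σ ∈ Finset.univ.filter (fun σ : S => ¬ σ ∈ Set.range τ),
        phi (pfun (e.symm i)).1 σ.1 * w σ = (N.mulVec y) i := by
      calc ∑ σ ∈ Finset.univ.filter (fun σ : S => ¬ σ ∈ Set.range τ),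
          phi (pfun (e.symm i)).1 σ.1 * w σ
          = ∑ σ : κ, phi (pfun (e.symm i)).1 σ.1.1 * w σ.1 :=
            Finset.sum_subtype _ (by intro x; simp) _
        _ = (N.mulVec y) i := by
            simp only [Matrix.mulVec, dotProduct]
            apply Finset.sum_congr rfl
            intro σ _
            rw [hNA i σ]
    rw [hrest] at hk
    linarith
  have hv : ∀ i : κ, (N.mulVec y) i ∈ ZZ := by
    intro i
    rw [hEq i]
    apply neg_mem
    apply Subring.sum_mem
    intro σ hσ
    have hmem : σ ∈ Set.range τ := (Finset.mem_filter.mp hσ).2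
    obtain ⟨k, hk⟩ := hmem
    apply mul_mem (phi_tuval _ _).mem_ZZ
    rw [← hk]
    exact hB k
  have hy : ∀ σ : κ, y σ ∈ ZZ := by
    have hyeq : y = N⁻¹.mulVec (N.mulVec y) := by
      rw [Matrix.mulVec_mulVec, Matrix.nonsing_inv_mul N
        (isUnit_iff_ne_zero.mpr hNdet_ne), Matrix.one_mulVec]
    intro σ
    rw [congrFun hyeq σ]
    simp only [Matrix.mulVec, dotProduct]
    exact Subring.sum_mem _ (fun j _ => mul_mem (hNinv σ j) (hv j))
  intro σ
  by_cases h : σ ∈ Set.range τ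
  · obtain ⟨i, rfl⟩ := h
    exact hB i
  · exact hy ⟨σ, h⟩

end KirchAux
namespace KirchAux

lemma comp_apply_mem (a b : ℝ) (D : Finset Seg) (hD : ∀ σ ∈ D, σ.InBox a b) (d : ℕ)
    (τ₁ τ₂ : Fin d → {σ // σ ∈ D}) (hτ₂ : IsParam a b D d τ₂)
    (x : Fin d → ℝ) (hx : ∀ j, x j ∈ ZZ) (i : Fin d) :
    ((evalMap a b D d τ₁).comp
      (LinearEquiv.ofBijective (evalMap a b D d τ₂) hτ₂.2).symm.toLinearMap) x i ∈ ZZ := by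
  set w := (LinearEquiv.ofBijective (evalMap a b D d τ₂) hτ₂.2).symm x with hwdef
  have happ : evalMap a b D d τ₂ w = x := by
    have := (LinearEquiv.ofBijective (evalMap a b D d τ₂) hτ₂.2).apply_symm_apply x
    rw [hwdef]
    exact this
  have hcoord : ∀ j, w.1 (τ₂ j) = x j := fun j => congrFun happ j
  show w.1 (τ₁ i) ∈ ZZ
  exact param_integral a b D hD d τ₂ hτ₂ w.1 w.2
    (fun j => by rw [hcoord j]; exact hx j) (τ₁ i)

end KirchAux
/-- general form of Statement 8, for an arbitrary number of chosen segments -/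
lemma KirchAux.abs_det_aux (a b : ℝ) (D : Finset Seg) (hD1 : ∀ σ ∈ D, σ.InBox a b)
    (d : ℕ) (τ τ' : Fin d → {σ // σ ∈ D})
    (hτ : IsParam a b D d τ) (hτ' : IsParam a b D d τ') :
    |LinearMap.det ((evalMap a b D d τ).comp
      ((LinearEquiv.ofBijective (evalMap a b D d τ') hτ'.2).symm.toLinearMap))| = 1 := by
  classical
  set C := (evalMap a b D d τ).comp
      ((LinearEquiv.ofBijective (evalMap a b D d τ') hτ'.2).symm.toLinearMap) with hC
  set C' := (evalMap a b D d τ').comp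
      ((LinearEquiv.ofBijective (evalMap a b D d τ) hτ.2).symm.toLinearMap) with hC'
  have hcomp : C.comp C' = LinearMap.id := by
    apply LinearMap.ext
    intro x
    rw [hC, hC']
    simp only [LinearMap.comp_apply, LinearEquiv.coe_coe, LinearMap.id_apply]
    have h1 : evalMap a b D d τ' ((LinearEquiv.ofBijective (evalMap a b D d τ) hτ.2).symm x)
        = (LinearEquiv.ofBijective (evalMap a b D d τ') hτ'.2)
          ((LinearEquiv.ofBijective (evalMap a b D d τ) hτ.2).symm x) := rfl
    rw [h1, LinearEquiv.symm_apply_apply]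
    have h2 : evalMap a b D d τ ((LinearEquiv.ofBijective (evalMap a b D d τ) hτ.2).symm x)
        = (LinearEquiv.ofBijective (evalMap a b D d τ) hτ.2)
          ((LinearEquiv.ofBijective (evalMap a b D d τ) hτ.2).symm x) := rfl
    rw [h2, LinearEquiv.apply_symm_apply]
  -- integer matrices of `C` and `C'`
  have hbasis : ∀ j : Fin d, ∀ j' : Fin d,
      (fun j'' => if j'' = j then (1:ℝ) else 0) j' ∈ KirchAux.ZZ := by
    intro j j'
    by_cases h : j' = j
    · simp only [if_pos h]; exact Subring.one_mem _
    · simp only [if_neg h]; exact Subring.zero_mem _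
  have hCmem : ∀ i j, (LinearMap.toMatrix' C) i j ∈ KirchAux.ZZ := by
    intro i j
    rw [LinearMap.toMatrix'_apply, hC]
    exact KirchAux.comp_apply_mem a b D hD1 d τ τ' hτ' (Pi.single j 1) (fun j' => by rw [Pi.single_apply]; exact hbasis j j') i
  have hC'mem : ∀ i j, (LinearMap.toMatrix' C') i j ∈ KirchAux.ZZ := by
    intro i j
    rw [LinearMap.toMatrix'_apply, hC']
    exact KirchAux.comp_apply_mem a b D hD1 d τ' τ hτ (Pi.single j 1) (fun j' => by rw [Pi.single_apply]; exact hbasis j j') i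
  obtain ⟨m, hm⟩ := KirchAux.det_mem_ZZ _ hCmem
  obtain ⟨n, hn⟩ := KirchAux.det_mem_ZZ _ hC'mem
  have hm' : (m : ℝ) = LinearMap.det C := by
    rw [← LinearMap.det_toMatrix' C]; exact_mod_cast hm
  have hn' : (n : ℝ) = LinearMap.det C' := by
    rw [← LinearMap.det_toMatrix' C']; exact_mod_cast hn
  have hdet1 : LinearMap.det C * LinearMap.det C' = 1 := by
    rw [← LinearMap.det_comp, hcomp, LinearMap.det_id]
  have hmn : m * n = 1 := by
    have : ((m * n : ℤ) : ℝ) = 1 := by push_cast; rw [hm', hn']; exact hdet1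
    exact_mod_cast this
  have hunit : m = 1 ∨ m = -1 := Int.isUnit_iff.mp (IsUnit.of_mul_eq_one n hmn)
  rw [← hm']
  rcases hunit with h|h <;> rw [h] <;> norm_num

/-- the change-of-parametrization automorphism of `ℝ^d` has
determinant `±1`. -/
theorem abs_det_change_of_parametrization (a b : ℝ) (ha : 0 < a) (hb : 0 < b)
    (D : Finset Seg) (hD : IsDrawing a b D)
    (hnodes : ∀ p, IsNode D p → ContinuousNode a b D p)
    (τ τ' : Fin (Module.finrank ℝ (kirchSub a b D)) → {σ // σ ∈ D})
    (hτ : IsParam a b D (Module.finrank ℝ (kirchSub a b D)) τ)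
    (hτ' : IsParam a b D (Module.finrank ℝ (kirchSub a b D)) τ') :
    |LinearMap.det ((evalMap a b D (Module.finrank ℝ (kirchSub a b D)) τ).comp
      ((LinearEquiv.ofBijective
          (evalMap a b D (Module.finrank ℝ (kirchSub a b D)) τ') hτ'.2).symm.toLinearMap))|
      = 1 :=
  KirchAux.abs_det_aux a b D hD.1 _ τ τ' hτ hτ'

end
end

section
/- Let X and Y be independent real random variables whose laws have densities g_V and g_H respectively with respect to Lebesgue measure, and let G(s) = ∫_ℝ g_V(s−t) g_H(t) dt. Then the Markov kernel κ from ℝ to ℝ defined by letting κ(s) be the measure with density t ↦ g_V(s−t)g_H(t)/G(s) whenever 0 < G(s) < ∞ (and an arbitrary fixed probability measure otherwise) is a regular conditional distribution of Y given X+Y; in particular κ(s) agrees with the conditional distribution of Y given X+Y for (law of X+Y)-almost every s. -/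
open MeasureTheory ProbabilityTheory
open scoped ENNReal

/-- if `X` and `Y` are independent with densities `g_V`, `g_H`, then
the kernel with density `t ↦ g_V(s-t) g_H(t) / G(s)` (where `G = g_V ∗ g_H`, defined
whenever `0 < G(s) < ∞`) is a regular conditional distribution of `Y` given `X + Y`;
in particular it agrees a.e. with `condDistrib`. -/
theorem kernel_is_condDistrib_of_densities
    {Ω : Type*} [MeasurableSpace Ω] (P : Measure Ω) [IsProbabilityMeasure P]
    (X Y : Ω → ℝ) (hX : Measurable X) (hY : Measurable Y)
    (hindep : IndepFun X Y P)
    (gV gH : ℝ → ℝ) (hgVm : Measurable gV) (hgHm : Measurable gH)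
    (hgV0 : ∀ x, 0 ≤ gV x) (hgH0 : ∀ x, 0 ≤ gH x)
    (hlawX : Measure.map X P = volume.withDensity fun x => ENNReal.ofReal (gV x))
    (hlawY : Measure.map Y P = volume.withDensity fun x => ENNReal.ofReal (gH x))
    (G : ℝ → ℝ≥0∞) (hG : G = fun s => ∫⁻ t, ENNReal.ofReal (gV (s - t) * gH t))
    (κ : Kernel ℝ ℝ) [IsMarkovKernel κ]
    (hκ : ∀ s, 0 < G s → G s < ⊤ →
      κ s = volume.withDensity fun t => ENNReal.ofReal (gV (s - t) * gH t) / G s) :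
    (∀ A B : Set ℝ, MeasurableSet A → MeasurableSet B →
      P ((fun ω => X ω + Y ω) ⁻¹' A ∩ Y ⁻¹' B)
        = ∫⁻ s in A, κ s B ∂(Measure.map (fun ω => X ω + Y ω) P)) ∧
    (∀ᵐ s ∂(Measure.map (fun ω => X ω + Y ω) P),
      κ s = condDistrib Y (fun ω => X ω + Y ω) P s) := by
  have hSm : Measurable fun ω => X ω + Y ω := hX.add hY
  set S : Ω → ℝ := fun ω => X ω + Y ω with hSdef
  set f : ℝ → ℝ → ℝ≥0∞ := fun s t => ENNReal.ofReal (gV (s - t) * gH t) with hfdef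
  have hfm : Measurable (Function.uncurry f) :=
    ENNReal.measurable_ofReal.comp
      ((hgVm.comp (measurable_fst.sub measurable_snd)).mul (hgHm.comp measurable_snd))
  have hGf : G = fun s => ∫⁻ t, f s t := hG
  have hGm : Measurable G := by
    rw [hGf]
    exact Measurable.lintegral_prod_right hfm
  -- indicator helper
  have hind : ∀ (C : Set ℝ), MeasurableSet C → ∀ (g : ℝ → ℝ≥0∞),
      ∫⁻ x, C.indicator 1 x * g x ∂volume = ∫⁻ x in C, g x ∂volume := by
    intro C hC g
    rw [← lintegral_indicator hC _]
    refine lintegral_congr fun x => ?_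
    by_cases hx : x ∈ C <;> simp [hx]
  -- key computation
  have key : ∀ A B : Set ℝ, MeasurableSet A → MeasurableSet B →
      P (S ⁻¹' A ∩ Y ⁻¹' B) = ∫⁻ s in A, ∫⁻ t in B, f s t := by
    intro A B hA hB
    have hmap : Measure.map (fun ω => (X ω, Y ω)) P
        = (Measure.map X P).prod (Measure.map Y P) :=
      (indepFun_iff_map_prod_eq_prod_map_map hX.aemeasurable hY.aemeasurable).mp hindep
    have hprod : (Measure.map X P).prod (Measure.map Y P)
        = (volume.prod volume).withDensity
            (fun p => ENNReal.ofReal (gV p.1) * ENNReal.ofReal (gH p.2)) := by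
      rw [hlawX, hlawY]
      refine Measure.prod_eq fun s t hs ht => ?_
      rw [withDensity_apply _ (hs.prod ht), ← Measure.prod_restrict,
        lintegral_prod_mul (f := fun x => ENNReal.ofReal (gV x))
          (g := fun x => ENNReal.ofReal (gH x)) hgVm.ennreal_ofReal.aemeasurable
          hgHm.ennreal_ofReal.aemeasurable,
        withDensity_apply _ hs, withDensity_apply _ ht]
    have hE : MeasurableSet {p : ℝ × ℝ | p.1 + p.2 ∈ A ∧ p.2 ∈ B} :=
      ((measurable_fst.add measurable_snd) hA).inter (measurable_snd hB)
    have h1 : P (S ⁻¹' A ∩ Y ⁻¹' B)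
        = ((Measure.map X P).prod (Measure.map Y P))
            {p : ℝ × ℝ | p.1 + p.2 ∈ A ∧ p.2 ∈ B} := by
      rw [← hmap, Measure.map_apply (hX.prodMk hY) hE]
      rfl
    rw [h1, hprod, withDensity_apply _ hE, ← lintegral_indicator hE _]
    set F : ℝ × ℝ → ℝ≥0∞ := fun p =>
      A.indicator 1 (p.1 + p.2) * B.indicator 1 p.2
        * (ENNReal.ofReal (gV p.1) * ENNReal.ofReal (gH p.2)) with hFdef
    have hFm : Measurable F := by
      refine Measurable.mul (Measurable.mul ?_ ?_) ?_
      · exact (measurable_const.indicator hA).comp (measurable_fst.add measurable_snd)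
      · exact (measurable_const.indicator hB).comp measurable_snd
      · exact ((ENNReal.measurable_ofReal.comp hgVm).comp measurable_fst).mul
          ((ENNReal.measurable_ofReal.comp hgHm).comp measurable_snd)
    have hFeq : ∀ p : ℝ × ℝ,
        {p : ℝ × ℝ | p.1 + p.2 ∈ A ∧ p.2 ∈ B}.indicator
          (fun p => ENNReal.ofReal (gV p.1) * ENNReal.ofReal (gH p.2)) p = F p := by
      intro p
      by_cases h1 : p.1 + p.2 ∈ A <;> by_cases h2 : p.2 ∈ B <;>
        simp [hFdef, Set.indicator, h1, h2]
    rw [lintegral_congr hFeq]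
    set F2 : ℝ → ℝ → ℝ≥0∞ := fun s t =>
      A.indicator 1 s * (B.indicator 1 t * f s t) with hF2def
    have hF2m : Measurable (Function.uncurry F2) := by
      refine Measurable.mul ?_ (Measurable.mul ?_ ?_)
      · exact (measurable_const.indicator hA).comp measurable_fst
      · exact (measurable_const.indicator hB).comp measurable_snd
      · exact hfm
    have step1 : ∫⁻ p, F p ∂(volume.prod volume)
        = ∫⁻ t, ∫⁻ s, F2 s t ∂volume ∂volume := by
      rw [lintegral_prod_symm F hFm.aemeasurable]
      refine lintegral_congr fun y => ?_
      have htr := lintegral_add_right_eq_self (μ := (volume : Measure ℝ))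
        (fun s => F2 s y) y
      rw [← htr]
      refine lintegral_congr fun x => ?_
      simp only [hF2def, hFdef, hfdef, add_sub_cancel_right]
      rw [ENNReal.ofReal_mul (hgV0 x)]
      ring
    have hswap : Measurable (Function.uncurry fun t s => F2 s t) := by
      have h : (Function.uncurry fun t s => F2 s t) = Function.uncurry F2 ∘ Prod.swap := rfl
      rw [h]; exact hF2m.comp measurable_swap
    rw [step1, lintegral_lintegral_swap hswap.aemeasurable]
    refine Eq.trans (lintegral_congr fun s => ?_) (hind A hA _)
    have hfs : Measurable fun t => B.indicator 1 t * f s t :=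
      (measurable_const.indicator hB).mul
        (((hgVm.comp (measurable_const.sub measurable_id)).mul hgHm).ennreal_ofReal)
    rw [lintegral_const_mul'' _ hfs.aemeasurable, hind B hB]
  -- law of S
  have hlawS : Measure.map S P = volume.withDensity G := by
    ext A hA
    rw [Measure.map_apply hSm hA, withDensity_apply _ hA]
    have hk := key A Set.univ hA MeasurableSet.univ
    simp only [Set.preimage_univ, Set.inter_univ, Measure.restrict_univ] at hk
    rw [hk, hGf]
  -- a.e. finiteness of G
  have hGfin : ∀ᵐ s ∂(volume : Measure ℝ), G s < ⊤ := by
    refine ae_lt_top hGm ?_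
    have h1 : (volume.withDensity G) Set.univ = 1 := by
      rw [← hlawS, Measure.map_apply hSm MeasurableSet.univ]
      simp
    rw [withDensity_apply _ MeasurableSet.univ, Measure.restrict_univ] at h1
    simp [h1]
  -- a.e. identity
  have hae : ∀ (B : Set ℝ), MeasurableSet B →
      ∀ᵐ s ∂(volume : Measure ℝ), κ s B * G s = ∫⁻ t in B, f s t := by
    intro B hB
    filter_upwards [hGfin] with s hs
    rcases eq_or_lt_of_le (show (0:ℝ≥0∞) ≤ G s from zero_le) with h0 | h0
    · have hle : ∫⁻ t in B, f s t ≤ G s := by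
        rw [hGf]
        exact setLIntegral_le_lintegral _ _
      rw [← h0, mul_zero]
      exact (le_antisymm (h0 ▸ hle) zero_le).symm
    · rw [hκ s h0 hs, withDensity_apply _ hB]
      simp_rw [div_eq_mul_inv]
      rw [lintegral_mul_const' _ _ (by simp [h0.ne']), ← div_eq_mul_inv]
      exact ENNReal.div_mul_cancel h0.ne' hs.ne
  -- part 1
  have part1 : ∀ A B : Set ℝ, MeasurableSet A → MeasurableSet B →
      P (S ⁻¹' A ∩ Y ⁻¹' B) = ∫⁻ s in A, κ s B ∂(Measure.map S P) := by
    intro A B hA hB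
    rw [key A B hA hB, hlawS, restrict_withDensity hA,
      lintegral_withDensity_eq_lintegral_mul _ hGm (κ.measurable_coe hB)]
    refine (lintegral_congr_ae (ae_restrict_of_ae ?_)).symm
    filter_upwards [hae B hB] with s hs
    simpa [mul_comm] using hs
  -- compProd equality
  haveI : IsProbabilityMeasure (Measure.map S P) := Measure.isProbabilityMeasure_map hSm.aemeasurable
  haveI : IsProbabilityMeasure (Measure.map (fun ω => (S ω, Y ω)) P) :=
    Measure.isProbabilityMeasure_map (hSm.prodMk hY).aemeasurable
  have hcomp : Measure.map (fun ω => (S ω, Y ω)) P = (Measure.map S P) ⊗ₘ κ := by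
    refine ext_of_generate_finite _ generateFrom_prod.symm isPiSystem_prod ?_ ?_
    · rintro s ⟨A, hA, B, hB, rfl⟩
      simp only [Set.mem_setOf_eq] at hA hB
      rw [Measure.map_apply (hSm.prodMk hY) (hA.prod hB),
        Measure.compProd_apply_prod hA hB]
      have hpre : (fun ω => (S ω, Y ω)) ⁻¹' (A ×ˢ B) = S ⁻¹' A ∩ Y ⁻¹' B := rfl
      rw [hpre, part1 A B hA hB]
    · simp
  exact ⟨part1, (condDistrib_ae_eq_of_measure_eq_compProd_of_measurable hSm hY hcomp).symm⟩
end

section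
/- Let X and Y be independent random variables such that −X is exponential with rate γ_V > 0 and Y is exponential with rate γ_H > 0. Then a regular conditional distribution of Y given X+Y is given by the kernel κ where κ(s) is the probability measure on ℝ with density t ↦ (γ_V+γ_H) · exp(−(γ_V+γ_H)(t − max(s,0))) · 1[t ≥ max(s,0)]; equivalently, for (law of X+Y)-almost every s ∈ ℝ, the conditional distribution of Y given X+Y = s is the law of max(s,0) + Z where Z is exponential with rate γ_V+γ_H. -/
open MeasureTheory ProbabilityTheory
open scoped ENNReal

noncomputable def expKc (a b s : ℝ) : ℝ≥0∞ :=
  ENNReal.ofReal (a * b / (a + b) * Real.exp (a * s - (a + b) * max s 0))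

lemma measurable_expKc (a b : ℝ) : Measurable (expKc a b) := by
  apply Measurable.ennreal_ofReal
  fun_prop

lemma measurable_expPDF (r : ℝ) : Measurable (exponentialPDF r) := by
  unfold exponentialPDF
  exact (measurable_exponentialPDFReal r).ennreal_ofReal

lemma pdf_prod_eq {a b : ℝ} (ha : 0 < a) (hb : 0 < b) (s t : ℝ) :
    exponentialPDF a (t - s) * exponentialPDF b t
      = expKc a b s * exponentialPDF (a + b) (t - max s 0) := by
  have hc : 0 < a + b := by linarith
  rw [expKc]
  simp only [exponentialPDF_eq]
  rcases le_or_gt (max s 0) t with h | h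
  · have h1 : (0:ℝ) ≤ t - s := sub_nonneg.mpr (le_trans (le_max_left s 0) h)
    have h2 : (0:ℝ) ≤ t := le_trans (le_max_right s 0) h
    have h3 : (0:ℝ) ≤ t - max s 0 := sub_nonneg.mpr h
    rw [if_pos h1, if_pos h2, if_pos h3,
      ← ENNReal.ofReal_mul (by positivity), ← ENNReal.ofReal_mul (by positivity)]
    congr 1
    have e1 : a * Real.exp (-(a * (t - s))) * (b * Real.exp (-(b * t)))
        = a * b * Real.exp (-(a * (t - s)) + -(b * t)) := by
      rw [Real.exp_add]; ring1
    have e2 : a * b / (a + b) * Real.exp (a * s - (a + b) * max s 0)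
          * ((a + b) * Real.exp (-((a + b) * (t - max s 0))))
        = a * b * Real.exp ((a * s - (a + b) * max s 0) + -((a + b) * (t - max s 0))) := by
      rw [Real.exp_add]; field_simp
    rw [e1, e2]
    congr 2
    ring1
  · have h3 : ¬ (0:ℝ) ≤ t - max s 0 := by push_neg; linarith
    rw [if_neg h3]
    simp only [ENNReal.ofReal_zero, mul_zero]
    rcases lt_max_iff.mp h with h' | h'
    · rw [if_neg (by push_neg; linarith : ¬ (0:ℝ) ≤ t - s)]
      simp
    · rw [if_neg (not_le.mpr h')]
      simp

lemma map_add_withDensity (f : ℝ → ℝ≥0∞) (m : ℝ) :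
    Measure.map (fun z => m + z) (volume.withDensity f)
      = volume.withDensity (fun t => f (t - m)) := by
  ext A hA
  rw [Measure.map_apply (measurable_const_add m) hA, withDensity_apply' _ _,
    withDensity_apply _ hA]
  have hg : MeasurePreserving (fun t : ℝ => m + t) volume volume :=
    measurePreserving_add_left volume m
  have hemb : MeasurableEmbedding (fun t : ℝ => m + t) :=
    (Homeomorph.addLeft m).measurableEmbedding
  have := hg.setLIntegral_comp_preimage_emb hemb (fun b => f (b - m)) A
  rw [← this]
  refine lintegral_congr fun t => ?_
  simp

/-- if `-X` is exponential with rate `γ_V` and `Y` is exponential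
with rate `γ_H`, independent, then the kernel with density
`t ↦ (γ_V+γ_H) exp(-(γ_V+γ_H)(t - max(s,0))) 1[t ≥ max(s,0)]` is a regular
conditional distribution of `Y` given `X + Y`; equivalently, a.e. the conditional law
of `Y` given `X + Y = s` is `max(s,0)` plus an exponential of rate `γ_V + γ_H`. -/
theorem exp_minus_exp_cond
    {Ω : Type*} [MeasurableSpace Ω] (P : Measure Ω) [IsProbabilityMeasure P]
    (γV γH : ℝ) (hγV : 0 < γV) (hγH : 0 < γH)
    (X Y : Ω → ℝ) (hX : Measurable X) (hY : Measurable Y)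
    (hindep : IndepFun X Y P)
    (hlawX : Measure.map (fun ω => -X ω) P = volume.withDensity fun t =>
      ENNReal.ofReal (if 0 ≤ t then γV * Real.exp (-(γV * t)) else 0))
    (hlawY : Measure.map Y P = volume.withDensity fun t =>
      ENNReal.ofReal (if 0 ≤ t then γH * Real.exp (-(γH * t)) else 0))
    (κ : Kernel ℝ ℝ) [IsMarkovKernel κ]
    (hκ : ∀ s : ℝ, κ s = volume.withDensity fun t =>
      ENNReal.ofReal (if max s 0 ≤ t then
        (γV + γH) * Real.exp (-((γV + γH) * (t - max s 0))) else 0)) :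
    (∀ A B : Set ℝ, MeasurableSet A → MeasurableSet B →
      P ((fun ω => X ω + Y ω) ⁻¹' A ∩ Y ⁻¹' B)
        = ∫⁻ s in A, κ s B ∂(Measure.map (fun ω => X ω + Y ω) P)) ∧
    (∀ᵐ s ∂(Measure.map (fun ω => X ω + Y ω) P),
      κ s = condDistrib Y (fun ω => X ω + Y ω) P s) ∧
    (∀ᵐ s ∂(Measure.map (fun ω => X ω + Y ω) P),
      condDistrib Y (fun ω => X ω + Y ω) P s
        = Measure.map (fun z => max s 0 + z)
            (volume.withDensity fun t =>
              ENNReal.ofReal (if 0 ≤ t then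
                (γV + γH) * Real.exp (-((γV + γH) * t)) else 0))) := by
  have hc : (0:ℝ) < γV + γH := by linarith
  have mV : Measurable (exponentialPDF γV) := measurable_expPDF γV
  have mH : Measurable (exponentialPDF γH) := measurable_expPDF γH
  have mC : Measurable (exponentialPDF (γV + γH)) := measurable_expPDF _
  have hν : Measure.map (fun ω => -X ω) P = volume.withDensity (exponentialPDF γV) := by
    rw [hlawX]; congr 1; funext t; exact (exponentialPDF_eq γV t).symm
  have hμY : Measure.map Y P = volume.withDensity (exponentialPDF γH) := by
    rw [hlawY]; congr 1; funext t; exact (exponentialPDF_eq γH t).symm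
  have hκ' : ∀ s : ℝ, κ s
      = volume.withDensity (fun t => exponentialPDF (γV + γH) (t - max s 0)) := by
    intro s; rw [hκ s]; congr 1; funext t
    rw [exponentialPDF_eq]
    congr 1
    simp [sub_nonneg]
  -- probability measures
  have iV : IsProbabilityMeasure (volume.withDensity (exponentialPDF γV)) := by
    rw [← hν]; exact Measure.isProbabilityMeasure_map hX.neg.aemeasurable
  have iH : IsProbabilityMeasure (volume.withDensity (exponentialPDF γH)) := by
    rw [← hμY]; exact Measure.isProbabilityMeasure_map hY.aemeasurable
  -- indicator functions
  set IA : Set ℝ → ℝ → ℝ≥0∞ := fun A => A.indicator 1 with hIA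
  -- slice lemma
  have hslice : ∀ (s : ℝ) (B : Set ℝ), MeasurableSet B →
      ∫⁻ t in B, exponentialPDF γV (t - s) * exponentialPDF γH t ∂volume
        = expKc γV γH s * κ s B := by
    intro s B hB
    have hm : Measurable fun t => exponentialPDF (γV + γH) (t - max s 0) :=
      mC.comp (measurable_id.sub measurable_const)
    rw [hκ' s, withDensity_apply _ hB, ← lintegral_const_mul _ hm]
    refine setLIntegral_congr_fun hB (fun t _ => ?_)
    exact pdf_prod_eq hγV hγH s t
  -- joint law
  have hS : Measurable fun ω => X ω + Y ω := hX.add hY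
  have hpair : Measurable fun ω => (X ω + Y ω, Y ω) := hS.prodMk hY
  set ρ : Measure (ℝ × ℝ) := Measure.map (fun ω => (X ω + Y ω, Y ω)) P with hρ
  have iρ : IsProbabilityMeasure ρ := Measure.isProbabilityMeasure_map hpair.aemeasurable
  have hindep' : IndepFun (fun ω => -X ω) Y P := hindep.comp measurable_neg measurable_id
  have hjoint : Measure.map (fun ω => (-X ω, Y ω)) P
      = (volume.withDensity (exponentialPDF γV)).prod
          (volume.withDensity (exponentialPDF γH)) := by
    rw [← hν, ← hμY]
    exact (indepFun_iff_map_prod_eq_prod_map_map hX.neg.aemeasurable hY.aemeasurable).mp hindep'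
  have hT : Measurable fun p : ℝ × ℝ => (p.2 - p.1, p.2) :=
    (measurable_snd.sub measurable_fst).prodMk measurable_snd
  have hρ2 : ρ = Measure.map (fun p : ℝ × ℝ => (p.2 - p.1, p.2))
      ((volume.withDensity (exponentialPDF γV)).prod
        (volume.withDensity (exponentialPDF γH))) := by
    rw [← hjoint, Measure.map_map (f := fun ω => (-X ω, Y ω)) hT (hX.neg.prodMk hY), hρ]
    congr 1
    funext ω
    simp [Function.comp, sub_neg_eq_add, add_comm]
  -- rectangle formula
  have hrect : ∀ A B : Set ℝ, MeasurableSet A → MeasurableSet B →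
      ρ (A ×ˢ B) = ∫⁻ s in A, expKc γV γH s * κ s B ∂volume := by
    intro A B hA hB
    have mIA : Measurable (IA A) := measurable_one.indicator hA
    have mIB : Measurable (IA B) := measurable_one.indicator hB
    have hset : MeasurableSet ((fun p : ℝ × ℝ => (p.2 - p.1, p.2)) ⁻¹' (A ×ˢ B)) :=
      hT (hA.prod hB)
    rw [hρ2, Measure.map_apply hT (hA.prod hB), ← lintegral_indicator_one hset]
    have hind : ∀ p : ℝ × ℝ,
        ((fun p : ℝ × ℝ => (p.2 - p.1, p.2)) ⁻¹' (A ×ˢ B)).indicator 1 p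
          = IA A (p.2 - p.1) * IA B p.2 := by
      intro p
      by_cases h1 : p.2 - p.1 ∈ A <;> by_cases h2 : p.2 ∈ B <;>
        simp [hIA, Set.indicator_apply, Set.mem_prod, h1, h2]
    calc ∫⁻ p, ((fun p : ℝ × ℝ => (p.2 - p.1, p.2)) ⁻¹' (A ×ˢ B)).indicator 1 p
          ∂((volume.withDensity (exponentialPDF γV)).prod
              (volume.withDensity (exponentialPDF γH)))
        = ∫⁻ p, IA A (p.2 - p.1) * IA B p.2
          ∂((volume.withDensity (exponentialPDF γV)).prod
              (volume.withDensity (exponentialPDF γH))) :=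
          lintegral_congr hind
      _ = ∫⁻ u, (∫⁻ y, IA A (y - u) * IA B y
            ∂(volume.withDensity (exponentialPDF γH)))
            ∂(volume.withDensity (exponentialPDF γV)) := by
          exact lintegral_prod _
            (((mIA.comp (measurable_snd.sub measurable_fst)).mul
              (mIB.comp measurable_snd)).aemeasurable)
      _ = ∫⁻ u, (∫⁻ y, exponentialPDF γH y * (IA A (y - u) * IA B y) ∂volume)
            ∂(volume.withDensity (exponentialPDF γV)) := by
          refine lintegral_congr fun u => ?_
          have hg : Measurable fun y : ℝ => IA A (y - u) * IA B y :=
            (mIA.comp (measurable_id.sub measurable_const)).mul mIB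
          rw [lintegral_withDensity_eq_lintegral_mul volume mH hg]
          simp only [Pi.mul_apply]
      _ = ∫⁻ u, exponentialPDF γV u *
            ∫⁻ y, exponentialPDF γH y * (IA A (y - u) * IA B y) ∂volume ∂volume := by
          have hu : Measurable fun u : ℝ =>
              ∫⁻ y, exponentialPDF γH y * (IA A (y - u) * IA B y) ∂volume := by
            apply Measurable.lintegral_prod_right
            exact (mH.comp measurable_snd).mul
              (((mIA.comp (measurable_snd.sub measurable_fst))).mul (mIB.comp measurable_snd))
          rw [lintegral_withDensity_eq_lintegral_mul volume mV hu]
          simp only [Pi.mul_apply]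
      _ = ∫⁻ y, ∫⁻ u, exponentialPDF γV u *
            (exponentialPDF γH y * (IA A (y - u) * IA B y)) ∂volume ∂volume := by
          rw [← lintegral_lintegral_swap]
          · refine lintegral_congr fun u => ?_
            have hg : Measurable fun y : ℝ => exponentialPDF γH y * (IA A (y - u) * IA B y) :=
              mH.mul ((mIA.comp (measurable_id.sub measurable_const)).mul mIB)
            rw [← lintegral_const_mul _ hg]
          · exact ((mV.comp measurable_fst).mul ((mH.comp measurable_snd).mul
              ((mIA.comp (measurable_snd.sub measurable_fst)).mul
                (mIB.comp measurable_snd)))).aemeasurable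
      _ = ∫⁻ y, ∫⁻ s, exponentialPDF γV (y - s) *
            (exponentialPDF γH y * (IA A s * IA B y)) ∂volume ∂volume := by
          refine lintegral_congr fun y => ?_
          have hG : Measurable fun u : ℝ => exponentialPDF γV u *
              (exponentialPDF γH y * (IA A (y - u) * IA B y)) :=
            mV.mul (measurable_const.mul
              ((mIA.comp (measurable_const.sub measurable_id)).mul measurable_const))
          rw [← (Measure.measurePreserving_sub_left volume y).lintegral_comp hG]
          refine lintegral_congr fun s => ?_
          simp [sub_sub_cancel]
      _ = ∫⁻ s, ∫⁻ y, exponentialPDF γV (y - s) *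
            (exponentialPDF γH y * (IA A s * IA B y)) ∂volume ∂volume := by
          rw [lintegral_lintegral_swap]
          exact ((mV.comp (measurable_fst.sub measurable_snd)).mul
            ((mH.comp measurable_fst).mul
              ((mIA.comp measurable_snd).mul (mIB.comp measurable_fst)))).aemeasurable
      _ = ∫⁻ s, IA A s * (expKc γV γH s * κ s B) ∂volume := by
          refine lintegral_congr fun s => ?_
          have hg : Measurable fun t : ℝ =>
              (B.indicator (fun t => exponentialPDF γV (t - s) * exponentialPDF γH t)) t :=
            ((mV.comp (measurable_id.sub measurable_const)).mul mH).indicator hB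
          rw [← hslice s B hB, ← lintegral_indicator hB, ← lintegral_const_mul _ hg]
          refine lintegral_congr fun y => ?_
          by_cases hy : y ∈ B <;>
            by_cases hs : s ∈ A <;>
              simp [hIA, Set.indicator_apply, hy, hs]
      _ = ∫⁻ s in A, expKc γV γH s * κ s B ∂volume := by
          rw [← lintegral_indicator hA]
          refine lintegral_congr fun s => ?_
          by_cases hs : s ∈ A <;> simp [hIA, Set.indicator_apply, hs]
  -- the first marginal
  have hfst : ρ.fst = volume.withDensity (expKc γV γH) := by
    ext A hA
    rw [Measure.fst_apply hA, ← Set.prod_univ,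
      hrect A Set.univ hA MeasurableSet.univ, withDensity_apply _ hA]
    refine setLIntegral_congr_fun hA (fun s _ => ?_)
    simp
  have hcomp : ρ = ρ.fst ⊗ₘ κ := by
    refine MeasureTheory.ext_of_generate_finite _ generateFrom_prod.symm isPiSystem_prod ?_ ?_
    · rintro _ ⟨A, hA, B, hB, rfl⟩
      have hA' : MeasurableSet A := hA
      have hB' : MeasurableSet B := hB
      rw [hrect A B hA' hB', Measure.compProd_apply_prod hA' hB', hfst,
        setLIntegral_withDensity_eq_setLIntegral_mul volume (measurable_expKc γV γH)
          (κ.measurable_coe hB') hA']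
      simp only [Pi.mul_apply]
    · rw [Measure.compProd_apply_univ, Measure.fst_univ]
  have hmapS : Measure.map (fun ω => X ω + Y ω) P = ρ.fst :=
    (Measure.fst_map_prodMk hY).symm
  have hae : ∀ᵐ s ∂ρ.fst, κ s = ρ.condKernel s :=
    eq_condKernel_of_measure_eq_compProd κ hcomp
  have hcd : condDistrib Y (fun ω => X ω + Y ω) P = ρ.condKernel := by
    rw [condDistrib]
  refine ⟨?_, ?_, ?_⟩
  · intro A B hA hB
    have hprem : (fun ω => (X ω + Y ω, Y ω)) ⁻¹' (A ×ˢ B)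
        = (fun ω => X ω + Y ω) ⁻¹' A ∩ Y ⁻¹' B := Set.mk_preimage_prod _ _
    calc P ((fun ω => X ω + Y ω) ⁻¹' A ∩ Y ⁻¹' B)
        = ρ (A ×ˢ B) := by rw [hρ, Measure.map_apply hpair (hA.prod hB), hprem]
      _ = (ρ.fst ⊗ₘ κ) (A ×ˢ B) := by rw [← hcomp]
      _ = ∫⁻ s in A, κ s B ∂ρ.fst := Measure.compProd_apply_prod hA hB
      _ = ∫⁻ s in A, κ s B ∂(Measure.map (fun ω => X ω + Y ω) P) := by rw [hmapS]
  · rw [hmapS]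
    filter_upwards [hae] with s hs
    rw [hs, hcd]
  · rw [hmapS]
    filter_upwards [hae] with s hs
    have hpdf : (fun t => ENNReal.ofReal (if 0 ≤ t then
        (γV + γH) * Real.exp (-((γV + γH) * t)) else 0)) = exponentialPDF (γV + γH) :=
      funext fun t => (exponentialPDF_eq _ t).symm
    rw [hcd, ← hs, hκ' s, hpdf, map_add_withDensity (exponentialPDF (γV + γH)) (max s 0)]
end

section
/- Let X and Y be independent integer-valued random variables such that −X is geometric with parameter q_V ∈ (0,1) and Y is geometric with parameter q_H ∈ (0,1), and set r = q_V + q_H − q_V q_H. Then for every integer s and every natural number t with t ≥ max(s,0), ℙ(X+Y = s) > 0 and ℙ(Y = t | X+Y = s) = r(1−r)^{t − max(s,0)}; that is, conditionally on X+Y = s, the random variable Y − max(s,0) is geometric with parameter q_V + q_H − q_V q_H. -/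
open MeasureTheory ProbabilityTheory
open scoped ENNReal

/-- if `-X ~ Geometric(q_V)` and `Y ~ Geometric(q_H)` are
independent (integer-valued), then conditionally on `X + Y = s`,
`Y - max(s,0)` is geometric with parameter `q_V + q_H - q_V q_H`. -/
theorem geom_minus_geom_cond
    {Ω : Type*} [MeasurableSpace Ω] (P : Measure Ω) [IsProbabilityMeasure P]
    (qV qH : ℝ) (hqV : qV ∈ Set.Ioo (0:ℝ) 1) (hqH : qH ∈ Set.Ioo (0:ℝ) 1)
    (X Y : Ω → ℤ) (hX : Measurable X) (hY : Measurable Y)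
    (hindep : IndepFun X Y P)
    (hlawX : ∀ k : ℤ, P {ω | -X ω = k}
      = if 0 ≤ k then ENNReal.ofReal (qV * (1 - qV) ^ k.toNat) else 0)
    (hlawY : ∀ k : ℤ, P {ω | Y ω = k}
      = if 0 ≤ k then ENNReal.ofReal (qH * (1 - qH) ^ k.toNat) else 0)
    (s : ℤ) (t : ℕ) (hts : max s 0 ≤ (t : ℤ)) :
    0 < P {ω | X ω + Y ω = s} ∧
    P[|{ω | X ω + Y ω = s}] {ω | Y ω = (t : ℤ)}
      = ENNReal.ofReal ((qV + qH - qV * qH)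
          * (1 - (qV + qH - qV * qH)) ^ (t - (max s 0).toNat)) := by
  obtain ⟨hqV0, hqV1⟩ := hqV
  obtain ⟨hqH0, hqH1⟩ := hqH
  set r : ℝ := qV + qH - qV * qH with hrdef
  set x : ℝ := (1 - qV) * (1 - qH) with hxdef
  have hx0 : 0 < x := mul_pos (by linarith) (by linarith)
  have hx1 : x < 1 := by nlinarith
  have hrx : 1 - x = r := by rw [hrdef, hxdef]; ring
  have hr0 : 0 < r := by linarith
  set m : ℕ := (max s 0).toNat with hmdef
  have hms : (m : ℤ) = max s 0 := Int.toNat_of_nonneg (le_max_right s 0)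
  set n : ℕ := ((m : ℤ) - s).toNat with hndef
  have hns : (n : ℤ) = (m : ℤ) - s := Int.toNat_of_nonneg (by rw [hms]; omega)
  have htm : m ≤ t := by omega
  -- law of X
  have hlawX' : ∀ k : ℤ, P {ω | X ω = k}
      = if k ≤ 0 then ENNReal.ofReal (qV * (1 - qV) ^ (-k).toNat) else 0 := by
    intro k
    have : {ω | X ω = k} = {ω | -X ω = -k} := by ext ω; simp [neg_eq_iff_eq_neg]
    rw [this, hlawX]
    simp [neg_nonneg]
  -- independence product rule
  have hprod : ∀ a b : ℤ, P ({ω | Y ω = a} ∩ {ω | X ω = b})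
      = P {ω | Y ω = a} * P {ω | X ω = b} := by
    intro a b
    have := hindep.symm.measure_inter_preimage_eq_mul {a} {b}
      (measurableSet_singleton _) (measurableSet_singleton _)
    simpa [Set.preimage, Set.setOf_eq_eq_singleton'] using this
  -- the decomposition
  set f : ℤ → Set Ω := fun k => {ω | Y ω = k} ∩ {ω | X ω = s - k} with hfdef
  have hAeq : {ω | X ω + Y ω = s} = ⋃ k, f k := by
    ext ω
    simp only [hfdef, Set.mem_iUnion, Set.mem_inter_iff, Set.mem_setOf_eq]
    constructor
    · intro h; exact ⟨Y ω, rfl, by omega⟩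
    · rintro ⟨k, h1, h2⟩; omega
  have hfmeas : ∀ k, MeasurableSet (f k) := fun k =>
    (hY (measurableSet_singleton k)).inter (hX (measurableSet_singleton (s - k)))
  have hdisj : Pairwise (Function.onFun Disjoint f) := by
    intro i j hij
    simp only [Function.onFun, hfdef, Set.disjoint_left]
    rintro ω ⟨h1, -⟩ ⟨h2, -⟩
    exact hij (h1.symm.trans h2)
  have hPA : P {ω | X ω + Y ω = s} = ∑' k : ℤ, P (f k) := by
    rw [hAeq, measure_iUnion hdisj hfmeas]
  -- value of each piece
  have hfk : ∀ k : ℤ, P (f k)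
      = if (m : ℤ) ≤ k then
          ENNReal.ofReal ((qH * (1 - qH) ^ k.toNat) * (qV * (1 - qV) ^ (k - s).toNat))
        else 0 := by
    intro k
    rw [hfdef]
    simp only
    rw [hprod, hlawY, hlawX']
    by_cases hk : (m : ℤ) ≤ k
    · rw [if_pos hk, if_pos (by omega), if_pos (by omega),
        show (-(s - k)).toNat = (k - s).toNat by omega,
        ← ENNReal.ofReal_mul (mul_nonneg hqH0.le (pow_nonneg (by linarith) _))]
    · rw [if_neg hk]
      rcases lt_or_ge k 0 with h | h
      · rw [if_neg (show ¬ (0:ℤ) ≤ k from not_le.mpr h), zero_mul]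
      · rw [if_neg (show ¬ s - k ≤ 0 by omega), mul_zero]
  set a : ℝ := qH * (1 - qH) ^ m * (qV * (1 - qV) ^ n) with hadef
  have ha0 : 0 < a := by
    rw [hadef]
    exact mul_pos (mul_pos hqH0 (pow_pos (by linarith) _))
      (mul_pos hqV0 (pow_pos (by linarith) _))
  have hfmj : ∀ j : ℕ, P (f ((m : ℤ) + j)) = ENNReal.ofReal (a * x ^ j) := by
    intro j
    rw [hfk, if_pos (by omega)]
    congr 1
    have h1 : ((m : ℤ) + j).toNat = m + j := by omega
    have h2 : ((m : ℤ) + j - s).toNat = n + j := by omega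
    rw [h1, h2, hadef, hxdef, mul_pow]
    ring
  have hsum : ∑' k : ℤ, P (f k) = ENNReal.ofReal (a * (1 - x)⁻¹) := by
    have hinj : Function.Injective (fun j : ℕ => (m : ℤ) + j) := by
      intro u v h; simpa using h
    have hsupp : Function.support (fun k => P (f k)) ⊆ Set.range (fun j : ℕ => (m : ℤ) + j) := by
      intro k hk
      rw [Function.mem_support] at hk
      have hmk : (m : ℤ) ≤ k := by
        by_contra h
        exact hk (by rw [hfk, if_neg h])
      exact ⟨(k - m).toNat, by simp; omega⟩
    rw [← hinj.tsum_eq hsupp]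
    simp only [hfmj]
    rw [← ENNReal.ofReal_tsum_of_nonneg (fun j => mul_nonneg ha0.le (pow_nonneg hx0.le j))
      ((summable_geometric_of_lt_one hx0.le hx1).mul_left a)]
    rw [tsum_mul_left, tsum_geometric_of_lt_one hx0.le hx1]
  have hPA' : P {ω | X ω + Y ω = s} = ENNReal.ofReal (a * r⁻¹) := by
    rw [hPA, hsum, hrx]
  have hpos : 0 < P {ω | X ω + Y ω = s} := by
    rw [hPA']
    exact ENNReal.ofReal_pos.2 (mul_pos ha0 (inv_pos.2 hr0))
  refine ⟨hpos, ?_⟩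
  have hAmeas : MeasurableSet {ω | X ω + Y ω = s} := by
    have : {ω | X ω + Y ω = s} = (fun ω => X ω + Y ω) ⁻¹' {s} := by
      ext ω; simp
    rw [this]
    exact (hX.add hY) (measurableSet_singleton s)
  rw [cond_apply hAmeas]
  have hcap : {ω | X ω + Y ω = s} ∩ {ω | Y ω = (t : ℤ)} = f (t : ℤ) := by
    ext ω
    simp only [hfdef, Set.mem_inter_iff, Set.mem_setOf_eq]
    omega
  have hft : P (f (t : ℤ)) = ENNReal.ofReal (a * x ^ (t - m)) := by
    have : ((t : ℤ)) = (m : ℤ) + ((t - m : ℕ) : ℤ) := by omega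
    rw [this, hfmj]
  have hax : 0 < a * r⁻¹ := mul_pos ha0 (inv_pos.2 hr0)
  rw [hcap, hft, hPA', ← ENNReal.ofReal_inv_of_pos hax,
    ← ENNReal.ofReal_mul (inv_nonneg.2 hax.le)]
  congr 1
  have hx' : 1 - r = x := by linarith
  rw [hx', mul_inv, inv_inv]
  field_simp
end
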